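/- arXiv:2405.09991 — 4 statements merged into one kernel-verified Lean document; each statement's English description precedes it below -/
import Mathlib

section
/- Let a, b, c, d be complex numbers of modulus 1 with a+b+c+d=0. Then (a+d)(b+d)(c+d)=0; in particular, d=−a and c=−b, or d=−b and c=−a, or d=−c and b=−a. -/
open Matrix Complex

noncomputable section

/-- A complex Hadamard matrix: all entries unimodular, rows pairwise orthogonal. -/
def IsCHM {n : ℕ} (H : Matrix (Fin n) (Fin n) ℂ) : Prop :=
  (∀ i j, ‖H i j‖ = 1) ∧
  (∀ i j, i ≠ j → ∑ k, H i k * star (H j k) = 0)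

/-- A matrix is normalized if its first row and first column consist of ones. -/
def Normalized {n : ℕ} [NeZero n] (H : Matrix (Fin n) (Fin n) ℂ) : Prop :=
  (∀ j, H 0 j = 1) ∧ (∀ i, H i 0 = 1)

/-- Hadamard equivalence: permutations of rows and columns together with
multiplication of rows and columns by unimodular constants. -/
def HadEquiv {m n : ℕ} (H K : Matrix (Fin m) (Fin n) ℂ) : Prop :=
  ∃ (σ : Equiv.Perm (Fin m)) (τ : Equiv.Perm (Fin n)) (d : Fin m → ℂ) (e : Fin n → ℂ),
    (∀ i, ‖d i‖ = 1) ∧ (∀ j, ‖e j‖ = 1) ∧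
    (∀ i j, K i j = d i * e j * H (σ i) (τ j))

/-- The transposed Fourier matrix `F₆ᵀ(a,b)` built from `a`, `b` and
a primitive cube root of unity `w`. -/
def F6T (a b w : ℂ) : Matrix (Fin 6) (Fin 6) ℂ :=
  !![1, 1,   1,   1,  1,        1;
     1, 1,   1,  -1, -1,       -1;
     1, w,   w^2, a,  a*w,      a*w^2;
     1, w,   w^2,-a, -(a*w),   -(a*w^2);
     1, w^2, w,   b,  b*w^2,    b*w;
     1, w^2, w,  -b, -(b*w^2), -(b*w)]

/-- Membership (up to equivalence) in the transposed Fourier family. -/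
def MemF6T (H : Matrix (Fin 6) (Fin 6) ℂ) : Prop :=
  ∃ a b w : ℂ, ‖a‖ = 1 ∧ ‖b‖ = 1 ∧ 1 + w + w^2 = 0 ∧
    HadEquiv H (F6T a b w)

/-- The 2-circulant matrix `X₆(β,γ,ε,φ)`. -/
def X6 (β γ ε φ : ℂ) : Matrix (Fin 6) (Fin 6) ℂ :=
  !![1,  1,       1,          1,          1,        1;
     1, -1,      -(γ*ε)⁻¹,   -(β*φ)⁻¹,    (γ*ε)⁻¹,  (β*φ)⁻¹;
     1, -(ε/β),  -1,         -(ε/(γ*φ)),  ε/(γ*φ),  ε/β;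
     1, -(φ/γ),  -(φ/(β*ε)), -1,          φ/γ,      φ/(β*ε);
     1,  ε/β,     φ/(β*ε),    (β*φ)⁻¹,    (β*γ)⁻¹,  γ/β^2;
     1,  φ/γ,     (γ*ε)⁻¹,    ε/(γ*φ),    β/γ^2,    (β*γ)⁻¹]

/-- Membership (up to equivalence) in the 2-circulant family, with the
implicit unimodularity constraints and the defining polynomial equation. -/
def MemX6 (H : Matrix (Fin 6) (Fin 6) ℂ) : Prop :=
  ∃ β γ ε φ : ℂ, ‖β‖ = 1 ∧ ‖γ‖ = 1 ∧ ‖ε‖ = 1 ∧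
    ‖φ‖ = 1 ∧
    β*γ*ε^2 + β*γ*φ + β^2*ε*φ + γ*ε*φ + β*γ^2*ε*φ + β*γ*ε*φ^2 = 0 ∧
    HadEquiv H (X6 β γ ε φ)

/-- The Diţă matrix `D₆(c)`. -/
def D6 (c : ℂ) : Matrix (Fin 6) (Fin 6) ℂ :=
  !![1,  1,      1,  1,      1,      1;
     1, -1,      I, -I,     -(I*c),  I*c;
     1,  I,     -1,  I,     -I,     -I;
     1, -I,      I, -1,      I*c,   -(I*c);
     1, -(I/c), -I,  I/c,   -1,      I;
     1,  I/c,   -I, -(I/c),  I,     -1]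

/-- Membership (up to equivalence) in the Diţă family. -/
def MemD6 (H : Matrix (Fin 6) (Fin 6) ℂ) : Prop :=
  ∃ c : ℂ, ‖c‖ = 1 ∧ HadEquiv H (D6 c)

/-- Two rows are cancelling if two of the terms of their inner product cancel. -/
def Cancelling {n : ℕ} (r s : Fin n → ℂ) : Prop :=
  ∃ p q : Fin n, p ≠ q ∧ r p / s p + r q / s q = 0

/-- The first family of 3×6 matrices with pairwise cancelling rows. -/
def R1 (q : ℂ) : Matrix (Fin 3) (Fin 6) ℂ :=
  !![1,  1,  1,  1,  1,  1;
     1,  I,  1, -I, -1, -1;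
     1, -1, -I,  I,  q, -q]

/-- The second family of 3×6 matrices with pairwise cancelling rows. -/
def R2 (q : ℂ) : Matrix (Fin 3) (Fin 6) ℂ :=
  !![1,  1,  1,    1,      1,  1;
     1,  I, -1,   -I,      q, -q;
     1, -1, -q,    I*q, -(I*q), q]

/-- The inner-product-like sum `I((x,y))` over four selected columns. -/
def HI {m n : ℕ} (M : Matrix (Fin m) (Fin n) ℂ) (x y : Fin m) (c : Fin 4 → Fin n) : ℂ :=
  ∑ v, M x (c v) / M y (c v)

/-- The Haagerup condition for the 3×4 submatrix of `M` given by rows `i,j,k`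
and the four columns selected by `c`. -/
def HaagerupCond {m n : ℕ} (M : Matrix (Fin m) (Fin n) ℂ)
    (i j k : Fin m) (c : Fin 4 → Fin n) : Prop :=
  HI M i j c * HI M j k c * HI M k i c - 4 +
    HI M i j c * HI M j i c + HI M j k c * HI M k j c + HI M k i c * HI M i k c = 0

/-- The matrix `H(a)` of Proposition 6.3. -/
def Ha (a w : ℂ) : Matrix (Fin 6) (Fin 6) ℂ :=
  !![1,  1, 1,     1,      1,      1;
     1, -1, 1,    -1,      a,     -a;
     1,  1, w,     w,      w^2,    w^2;
     1, -1, w,    -w,      a*w^2, -(a*w^2);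
     1,  1, w^2,   w^2,    w,      w;
     1, -1, w^2, -(w^2),   a*w,   -(a*w)]

/-- If `a`, `b`, `c`, `d` are unimodular with `a + b + c + d = 0`,
then `(a+d)(b+d)(c+d) = 0`; in particular the four numbers pair up into
opposite pairs in one of three ways. -/
theorem stmt_2 (a b c d : ℂ)
    (ha : ‖a‖ = 1) (hb : ‖b‖ = 1)
    (hc : ‖c‖ = 1) (hd : ‖d‖ = 1)
    (hsum : a + b + c + d = 0) :
    (a + d) * (b + d) * (c + d) = 0 ∧
      ((d = -a ∧ c = -b) ∨ (d = -b ∧ c = -a) ∨ (d = -c ∧ b = -a)) := by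
  have ha0 : a ≠ 0 := by intro h; simp [h] at ha
  have hb0 : b ≠ 0 := by intro h; simp [h] at hb
  have hc0 : c ≠ 0 := by intro h; simp [h] at hc
  have hd0 : d ≠ 0 := by intro h; simp [h] at hd
  have key : ∀ z : ℂ, ‖z‖ = 1 → (starRingEnd ℂ) z = z⁻¹ := by
    intro z hz
    apply eq_inv_of_mul_eq_one_left
    rw [mul_comm, Complex.mul_conj]
    norm_cast
    simp [Complex.normSq_eq_norm_sq, hz]
  have hconj : a⁻¹ + b⁻¹ + c⁻¹ + d⁻¹ = 0 := by
    have := congrArg (starRingEnd ℂ) hsum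
    simpa [key a ha, key b hb, key c hc, key d hd] using this
  have hsym : b*c*d + a*c*d + a*b*d + a*b*c = 0 := by
    field_simp at hconj
    linear_combination hconj
  have hprod : (a + d) * (b + d) * (c + d) = 0 := by
    linear_combination hsym + d^2 * hsum
  refine ⟨hprod, ?_⟩
  rcases mul_eq_zero.1 hprod with h | h3
  · rcases mul_eq_zero.1 h with h1 | h2
    · exact Or.inl ⟨by linear_combination h1, by linear_combination hsum - h1⟩
    · exact Or.inr (Or.inl ⟨by linear_combination h2, by linear_combination hsum - h2⟩)
  · exact Or.inr (Or.inr ⟨by linear_combination h3, by linear_combination hsum - h3⟩)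
end
end

section
/- Let H be a normalized complex Hadamard matrix of order 6 containing three entries equal to −1 in one of its rows. Then, up to equivalence, H is a member of the transposed Fourier family F₆ᵀ(a,b). -/
open Matrix Complex

noncomputable section

/-! ### Auxiliary lemmas for the proof of `stmt_3` -/

lemma unim_conj' {z : ℂ} (hz : ‖z‖ = 1) : z * (starRingEnd ℂ) z = 1 := by
  rw [Complex.mul_conj]; norm_cast; rw [Complex.normSq_eq_norm_sq, hz]; norm_num

lemma unim_ne' {z : ℂ} (hz : ‖z‖ = 1) : z ≠ 0 := by
  intro h; rw [h] at hz; simp at hz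

lemma eq_one_of_re' {z : ℂ} (h1 : ‖z‖ = 1) (h2 : z.re = 1) : z = 1 := by
  have h3 : ‖z‖ ^ 2 = 1 := by rw [h1]; norm_num
  rw [Complex.sq_norm, Complex.normSq_apply, h2] at h3
  have : z.im = 0 := by nlinarith
  exact Complex.ext (by simp [h2]) (by simp [this])

lemma eq_negone_of_re' {z : ℂ} (h1 : ‖z‖ = 1) (h2 : z.re = -1) : z = -1 := by
  have h3 : ‖z‖ ^ 2 = 1 := by rw [h1]; norm_num
  rw [Complex.sq_norm, Complex.normSq_apply, h2] at h3
  have : z.im = 0 := by nlinarith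
  exact Complex.ext (by simp [h2]) (by simp [this])

lemma sum_two' {z₁ z₂ : ℂ} (h1 : ‖z₁‖ = 1) (h2 : ‖z₂‖ = 1)
    (h : z₁ + z₂ = 2) : z₁ = 1 ∧ z₂ = 1 := by
  have r1 : |z₁.re| ≤ 1 := h1 ▸ Complex.abs_re_le_norm z₁
  have r2 : |z₂.re| ≤ 1 := h2 ▸ Complex.abs_re_le_norm z₂
  have hre : z₁.re + z₂.re = 2 := by
    have := congrArg Complex.re h; simpa using this
  rw [abs_le] at r1 r2
  exact ⟨eq_one_of_re' h1 (by linarith), eq_one_of_re' h2 (by linarith)⟩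

lemma sum_three_neg' {a b c : ℂ} (ha : ‖a‖ = 1) (hb : ‖b‖ = 1)
    (hc : ‖c‖ = 1) (h : a + b + c = -3) : a = -1 ∧ b = -1 ∧ c = -1 := by
  have r1 : |a.re| ≤ 1 := ha ▸ Complex.abs_re_le_norm a
  have r2 : |b.re| ≤ 1 := hb ▸ Complex.abs_re_le_norm b
  have r3 : |c.re| ≤ 1 := hc ▸ Complex.abs_re_le_norm c
  have hre : a.re + b.re + c.re = -3 := by
    have := congrArg Complex.re h; simpa using this
  rw [abs_le] at r1 r2 r3
  exact ⟨eq_negone_of_re' ha (by linarith), eq_negone_of_re' hb (by linarith),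
    eq_negone_of_re' hc (by linarith)⟩

lemma quad' {x y : ℂ} (hx : ‖x‖ = 1) (hy : ‖y‖ = 1)
    (h : 1 + x + y = 0) : x ^ 2 + x + 1 = 0 ∧ y = x ^ 2 := by
  have hxx := unim_conj' hx
  have hyy := unim_conj' hy
  have hcc : 1 + (starRingEnd ℂ) x + (starRingEnd ℂ) y = 0 := by
    have := congrArg (starRingEnd ℂ) h; simpa using this
  have hcx : (starRingEnd ℂ) x = -1 - x := by
    linear_combination hyy - hxx - ((starRingEnd ℂ) y) * h - (-1 - x) * hcc
  have hq : x ^ 2 + x + 1 = 0 := by linear_combination x * hcx - hxx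
  exact ⟨hq, by linear_combination h - hq⟩

lemma cube' {x : ℂ} (h : x ^ 2 + x + 1 = 0) : x ^ 3 = 1 := by
  linear_combination (x - 1) * h

lemma conj_eq_sq' {x : ℂ} (hx : ‖x‖ = 1) (h : x ^ 2 + x + 1 = 0) :
    (starRingEnd ℂ) x = x ^ 2 := by
  have hxx := unim_conj' hx
  have h3 := cube' h
  apply mul_left_cancel₀ (unim_ne' hx)
  rw [hxx]; linear_combination -h3

lemma root_cases' {x y : ℂ} (hx : x ^ 2 + x + 1 = 0) (hy : y ^ 2 + y + 1 = 0) :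
    y = x ∨ y = x ^ 2 := by
  have : (y - x) * (y - x ^ 2) = 0 := by linear_combination (x - 1 - y) * hx + hy
  rcases mul_eq_zero.mp this with h | h
  · left; linear_combination h
  · right; linear_combination h

lemma three_contra' {u2 u3 u4 : ℂ} (h3 : u3 = -u2) (h4 : u4 = -u2) (h5 : u4 = -u3)
    (ha : ‖u2‖ = 1) : False :=
  unim_ne' ha (by linear_combination (h4 - h5 + h3) / 2)

lemma pairkey' {x x' u u' ω ω' : ℂ}
    (hxa : ‖x‖ = 1) (hxa' : ‖x'‖ = 1)
    (hua : ‖u‖ = 1) (hua' : ‖u'‖ = 1)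
    (hwa : ‖ω‖ = 1) (hwa' : ‖ω'‖ = 1)
    (hq : x ^ 2 + x + 1 = 0) (hq' : x' ^ 2 + x' + 1 = 0)
    (hw : ω ^ 2 + ω + 1 = 0) (hw' : ω' ^ 2 + ω' + 1 = 0)
    (horth : 1 + x * (starRingEnd ℂ) x' + x ^ 2 * ((starRingEnd ℂ) x') ^ 2
      + u * (starRingEnd ℂ) u'
      + u * ω * ((starRingEnd ℂ) u' * (starRingEnd ℂ) ω')
      + u * ω ^ 2 * ((starRingEnd ℂ) u' * ((starRingEnd ℂ) ω') ^ 2) = 0) :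
    (x = x' → u' = -u ∧ ω' = ω) ∧ (x ≠ x' → x' = x ^ 2 ∧ ω' = ω ^ 2) := by
  have hcx' : (starRingEnd ℂ) x' = x' ^ 2 := conj_eq_sq' hxa' hq'
  have hcω' : (starRingEnd ℂ) ω' = ω' ^ 2 := conj_eq_sq' hwa' hw'
  have hx3 := cube' hq
  have hx'3 := cube' hq'
  have hω3 := cube' hw
  have hω'3 := cube' hw'
  have huu' : u' * (starRingEnd ℂ) u' = 1 := unim_conj' hua'
  have hcu'a : ‖(starRingEnd ℂ) u'‖ = 1 := by rwa [Complex.norm_conj]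
  have hcω'a : ‖(starRingEnd ℂ) ω'‖ = 1 := by rwa [Complex.norm_conj]
  constructor
  · intro hxx'
    subst hxx'
    have hx1 : x * (starRingEnd ℂ) x = 1 := unim_conj' hxa
    have hsum : u * (starRingEnd ℂ) u'
        + u * ω * ((starRingEnd ℂ) u' * (starRingEnd ℂ) ω')
        + u * ω ^ 2 * ((starRingEnd ℂ) u' * ((starRingEnd ℂ) ω') ^ 2) = -3 := by
      linear_combination horth - hx1 - (x * (starRingEnd ℂ) x + 1) * hx1
    obtain ⟨hA, hB, hC⟩ := sum_three_neg'
      (by simp [_root_.map_mul, hua, hua', hcu'a])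
      (by simp [_root_.map_mul, hua, hua', hwa, hwa', hcu'a, hcω'a])
      (by simp [_root_.map_mul, map_pow, hua, hua', hwa, hwa', hcu'a, hcω'a]) hsum
    have hu' : u' = -u := by linear_combination u' * hA - u * huu'
    have hωcω : ω * (starRingEnd ℂ) ω' = 1 := by
      linear_combination -hB + (ω * (starRingEnd ℂ) ω') * hA
    have hω'ω : ω' = ω := by
      have h2 : ω' * (starRingEnd ℂ) ω' = 1 := unim_conj' hwa'
      linear_combination ω * h2 - ω' * hωcω
    exact ⟨hu', hω'ω⟩
  · intro hne
    have hx2 : x' = x ^ 2 := by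
      rcases root_cases' hq hq' with h | h
      · exact absurd h.symm hne
      · exact h
    have hcx'v : (starRingEnd ℂ) x' = x := by
      rw [hcx', hx2]; linear_combination x * hx3
    rw [hcx'v] at horth
    have hP : u * (starRingEnd ℂ) u' * (1 + ω * (starRingEnd ℂ) ω'
        + ω ^ 2 * ((starRingEnd ℂ) ω') ^ 2) = 0 := by
      linear_combination horth - hq - x * hx3
    have hQ : 1 + ω * (starRingEnd ℂ) ω' + ω ^ 2 * ((starRingEnd ℂ) ω') ^ 2 = 0 := by
      rcases mul_eq_zero.mp hP with h | h
      · rcases mul_eq_zero.mp h with h | h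
        · exact absurd h (unim_ne' hua)
        · exact absurd h (unim_ne' hcu'a)
      · exact h
    have hωne : ω' ≠ ω := by
      intro he
      subst he
      rw [hcω'] at hQ
      have : (3 : ℂ) = 0 := by linear_combination hQ - (2 + ω' ^ 3) * hω'3
      norm_num at this
    rcases root_cases' hw hw' with h | h
    · exact absurd h hωne
    · exact ⟨hx2, h⟩

lemma rowlem' (H : Matrix (Fin 6) (Fin 6) ℂ) (hH : IsCHM H)
    (h0 : ∀ j, H 0 j = 1) (hc : ∀ i, H i 0 = 1)
    (h11 : H 1 1 = 1) (h12 : H 1 2 = 1) (h13 : H 1 3 = -1) (h14 : H 1 4 = -1)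
    (h15 : H 1 5 = -1) (r : Fin 6) (hr0 : r ≠ 0) (hr1 : r ≠ 1) :
    (H r 1) ^ 2 + (H r 1) + 1 = 0 ∧ H r 2 = (H r 1) ^ 2 ∧
    ∃ ω : ℂ, ‖ω‖ = 1 ∧ ω ^ 2 + ω + 1 = 0 ∧
      H r 4 = H r 3 * ω ∧ H r 5 = H r 3 * ω ^ 2 := by
  obtain ⟨habs, horth⟩ := hH
  have e0 := horth r 0 hr0
  have e1 := horth r 1 hr1
  rw [Fin.sum_univ_six] at e0 e1
  simp only [h0, hc, h11, h12, h13, h14, h15, star_one, star_neg, mul_one, mul_neg] at e0 e1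
  have hxy : 1 + H r 1 + H r 2 = 0 := by linear_combination e0 / 2 + e1 / 2
  have huvt : H r 3 + H r 4 + H r 5 = 0 := by linear_combination e0 / 2 - e1 / 2
  obtain ⟨hq, hy⟩ := quad' (habs r 1) (habs r 2) hxy
  have hu0 : H r 3 ≠ 0 := unim_ne' (habs r 3)
  have habsω : ‖H r 4 * (H r 3)⁻¹‖ = 1 := by
    rw [norm_mul, norm_inv, habs r 4, habs r 3]; norm_num
  have habst : ‖H r 5 * (H r 3)⁻¹‖ = 1 := by
    rw [norm_mul, norm_inv, habs r 5, habs r 3]; norm_num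
  have hsum : 1 + H r 4 * (H r 3)⁻¹ + H r 5 * (H r 3)⁻¹ = 0 := by
    field_simp
    linear_combination huvt
  obtain ⟨hw, ht⟩ := quad' habsω habst hsum
  refine ⟨hq, hy, H r 4 * (H r 3)⁻¹, habsω, hw, ?_, ?_⟩
  · field_simp
  · rw [← ht]; field_simp

lemma pairlem' (H : Matrix (Fin 6) (Fin 6) ℂ) (hH : IsCHM H) (hc : ∀ i, H i 0 = 1)
    (r s : Fin 6) (hrs : r ≠ s)
    (ωr ωs : ℂ) (hωra : ‖ωr‖ = 1) (hωsa : ‖ωs‖ = 1)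
    (hwr : ωr ^ 2 + ωr + 1 = 0) (hws : ωs ^ 2 + ωs + 1 = 0)
    (hqr : (H r 1) ^ 2 + H r 1 + 1 = 0) (hqs : (H s 1) ^ 2 + H s 1 + 1 = 0)
    (hyr : H r 2 = (H r 1) ^ 2) (hys : H s 2 = (H s 1) ^ 2)
    (hvr : H r 4 = H r 3 * ωr) (htr : H r 5 = H r 3 * ωr ^ 2)
    (hvs : H s 4 = H s 3 * ωs) (hts : H s 5 = H s 3 * ωs ^ 2) :
    (H r 1 = H s 1 → H s 3 = -(H r 3) ∧ ωs = ωr) ∧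
    (H r 1 ≠ H s 1 → H s 1 = (H r 1) ^ 2 ∧ ωs = ωr ^ 2) := by
  have e := hH.2 r s hrs
  rw [Fin.sum_univ_six, hc r, hc s, hyr, hys, hvr, hvs, htr, hts] at e
  simp only [Complex.star_def, _root_.map_mul, map_pow, _root_.map_one] at e
  exact pairkey' (hH.1 r 1) (hH.1 s 1) (hH.1 r 3) (hH.1 s 3) hωra hωsa hqr hqs hwr hws
    (by linear_combination e)

lemma assemble' (H : Matrix (Fin 6) (Fin 6) ℂ) (A B C D : Fin 6) (a b w : ℂ)
    (h0 : ∀ j, H 0 j = 1)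
    (h10 : H 1 0 = 1) (h11 : H 1 1 = 1) (h12 : H 1 2 = 1)
    (h13 : H 1 3 = -1) (h14 : H 1 4 = -1) (h15 : H 1 5 = -1)
    (hA0 : H A 0 = 1) (hA1 : H A 1 = w) (hA2 : H A 2 = w ^ 2)
    (hA3 : H A 3 = a) (hA4 : H A 4 = a * w) (hA5 : H A 5 = a * w ^ 2)
    (hB0 : H B 0 = 1) (hB1 : H B 1 = w) (hB2 : H B 2 = w ^ 2)
    (hB3 : H B 3 = -a) (hB4 : H B 4 = -(a * w)) (hB5 : H B 5 = -(a * w ^ 2))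
    (hC0 : H C 0 = 1) (hC1 : H C 1 = w ^ 2) (hC2 : H C 2 = w)
    (hC3 : H C 3 = b) (hC4 : H C 4 = b * w ^ 2) (hC5 : H C 5 = b * w)
    (hD0 : H D 0 = 1) (hD1 : H D 1 = w ^ 2) (hD2 : H D 2 = w)
    (hD3 : H D 3 = -b) (hD4 : H D 4 = -(b * w ^ 2)) (hD5 : H D 5 = -(b * w))
    (hinj : Function.Injective ![0, 1, A, B, C, D]) :
    ∃ σ : Equiv.Perm (Fin 6), ∀ p q, F6T a b w p q = H (σ p) q := by
  refine ⟨Equiv.ofBijective _ (Finite.injective_iff_bijective.mp hinj), fun p q => ?_⟩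
  rw [Equiv.ofBijective_apply]
  fin_cases p <;> fin_cases q <;>
    first
    | exact (h0 _).symm
    | exact h10.symm | exact h11.symm | exact h12.symm
    | exact h13.symm | exact h14.symm | exact h15.symm
    | exact hA0.symm | exact hA1.symm | exact hA2.symm
    | exact hA3.symm | exact hA4.symm | exact hA5.symm
    | exact hB0.symm | exact hB1.symm | exact hB2.symm
    | exact hB3.symm | exact hB4.symm | exact hB5.symm
    | exact hC0.symm | exact hC1.symm | exact hC2.symm
    | exact hC3.symm | exact hC4.symm | exact hC5.symm
    | exact hD0.symm | exact hD1.symm | exact hD2.symm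
    | exact hD3.symm | exact hD4.symm | exact hD5.symm

lemma buildcase' (H : Matrix (Fin 6) (Fin 6) ℂ)
    (habs : ∀ i j, ‖H i j‖ = 1)
    (h0 : ∀ j, H 0 j = 1) (hc : ∀ i, H i 0 = 1)
    (h11 : H 1 1 = 1) (h12 : H 1 2 = 1) (h13 : H 1 3 = -1) (h14 : H 1 4 = -1)
    (h15 : H 1 5 = -1)
    (A B C D : Fin 6)
    (hinj1 : Function.Injective ![0, 1, A, B, C, D])
    (hinj2 : Function.Injective ![0, 1, C, D, A, B])
    (ωA ωC : ℂ)
    (hqA : (H A 1) ^ 2 + H A 1 + 1 = 0)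
    (hwA : ωA ^ 2 + ωA + 1 = 0)
    (hωC : ωC = ωA ^ 2)
    (hyA : H A 2 = (H A 1) ^ 2) (hyB : H B 2 = (H B 1) ^ 2)
    (hyC : H C 2 = (H C 1) ^ 2) (hyD : H D 2 = (H D 1) ^ 2)
    (hxB : H B 1 = H A 1) (hxC : H C 1 = (H A 1) ^ 2) (hxD : H D 1 = (H A 1) ^ 2)
    (hvA : H A 4 = H A 3 * ωA) (htA : H A 5 = H A 3 * ωA ^ 2)
    (hvB : H B 4 = H B 3 * ωA) (htB : H B 5 = H B 3 * ωA ^ 2)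
    (hvC : H C 4 = H C 3 * ωC) (htC : H C 5 = H C 3 * ωC ^ 2)
    (hvD : H D 4 = H D 3 * ωC) (htD : H D 5 = H D 3 * ωC ^ 2)
    (huB : H B 3 = -(H A 3)) (huD : H D 3 = -(H C 3)) :
    ∃ a b w : ℂ, ‖a‖ = 1 ∧ ‖b‖ = 1 ∧ 1 + w + w ^ 2 = 0 ∧
      ∃ σ τ : Equiv.Perm (Fin 6), ∀ p q, F6T a b w p q = H (σ p) (τ q) := by
  have hx3 : (H A 1) ^ 3 = 1 := cube' hqA
  rcases root_cases' hqA hwA with hcase | hcase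
  · -- ωA = H A 1 : no column swap needed
    obtain ⟨σ, hσ⟩ := assemble' H A B C D (H A 3) (H C 3) (H A 1) h0 (hc 1) h11 h12 h13 h14 h15
      (hc A) rfl hyA rfl
      (by rw [hvA, hcase])
      (by rw [htA, hcase])
      (hc B) hxB (by rw [hyB, hxB]) huB
      (by rw [hvB, huB, hcase]; ring)
      (by rw [htB, huB, hcase]; ring)
      (hc C) hxC (by rw [hyC, hxC]; linear_combination (H A 1) * hx3) rfl
      (by rw [hvC, hωC, hcase])
      (by rw [htC, hωC, hcase]; linear_combination (H C 3 * H A 1) * hx3)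
      (hc D) hxD (by rw [hyD, hxD]; linear_combination (H A 1) * hx3) huD
      (by rw [hvD, hωC, hcase, huD]; ring)
      (by rw [htD, hωC, hcase, huD]; linear_combination (-(H C 3) * H A 1) * hx3)
      hinj1
    exact ⟨H A 3, H C 3, H A 1, habs A 3, habs C 3, by linear_combination hqA, σ, 1,
      fun p q => by simpa using hσ p q⟩
  · -- ωA = (H A 1)^2 : swap the last two columns
    set M : Matrix (Fin 6) (Fin 6) ℂ := Matrix.of fun i j => H i (Equiv.swap 4 5 j) with hMdef
    have hM : ∀ i j, M i j = H i (Equiv.swap 4 5 j) := fun i j => rfl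
    have s0 : Equiv.swap (4 : Fin 6) 5 0 = 0 := by decide
    have s1 : Equiv.swap (4 : Fin 6) 5 1 = 1 := by decide
    have s2 : Equiv.swap (4 : Fin 6) 5 2 = 2 := by decide
    have s3 : Equiv.swap (4 : Fin 6) 5 3 = 3 := by decide
    have s4 : Equiv.swap (4 : Fin 6) 5 4 = 5 := by decide
    have s5 : Equiv.swap (4 : Fin 6) 5 5 = 4 := by decide
    obtain ⟨σ, hσ⟩ := assemble' M C D A B (H C 3) (H A 3) ((H A 1) ^ 2)
      (fun j => by rw [hM]; exact h0 _)
      (by rw [hM, s0]; exact hc 1)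
      (by rw [hM, s1]; exact h11)
      (by rw [hM, s2]; exact h12)
      (by rw [hM, s3]; exact h13)
      (by rw [hM, s4]; exact h15)
      (by rw [hM, s5]; exact h14)
      (by rw [hM, s0]; exact hc C)
      (by rw [hM, s1]; exact hxC)
      (by rw [hM, s2, hyC, hxC])
      (by rw [hM, s3])
      (by rw [hM, s4, htC, hωC, hcase]
          linear_combination (H C 3 * (H A 1) ^ 2 * ((H A 1) ^ 3 + 1)) * hx3)
      (by rw [hM, s5, hvC, hωC, hcase])
      (by rw [hM, s0]; exact hc D)
      (by rw [hM, s1]; exact hxD)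
      (by rw [hM, s2, hyD, hxD])
      (by rw [hM, s3]; exact huD)
      (by rw [hM, s4, htD, hωC, hcase, huD]
          linear_combination (-(H C 3) * (H A 1) ^ 2 * ((H A 1) ^ 3 + 1)) * hx3)
      (by rw [hM, s5, hvD, hωC, hcase, huD]; ring)
      (by rw [hM, s0]; exact hc A)
      (by rw [hM, s1]; linear_combination -(H A 1) * hx3)
      (by rw [hM, s2]; exact hyA)
      (by rw [hM, s3])
      (by rw [hM, s4, htA, hcase])
      (by rw [hM, s5, hvA, hcase])
      (by rw [hM, s0]; exact hc B)
      (by rw [hM, s1, hxB]; linear_combination -(H A 1) * hx3)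
      (by rw [hM, s2, hyB, hxB])
      (by rw [hM, s3]; exact huB)
      (by rw [hM, s4, htB, hcase, huB]; ring)
      (by rw [hM, s5, hvB, hcase, huB]; ring)
      hinj2
    refine ⟨H C 3, H A 3, (H A 1) ^ 2, habs C 3, habs A 3,
      by linear_combination hqA + (H A 1) * hx3, σ, Equiv.swap 4 5, fun p q => ?_⟩
    rw [hσ p q, hM]

lemma final' (H : Matrix (Fin 6) (Fin 6) ℂ) (hH : IsCHM H)
    (h0 : ∀ j, H 0 j = 1) (hc : ∀ i, H i 0 = 1)
    (h11 : H 1 1 = 1) (h12 : H 1 2 = 1) (h13 : H 1 3 = -1) (h14 : H 1 4 = -1)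
    (h15 : H 1 5 = -1) :
    ∃ a b w : ℂ, ‖a‖ = 1 ∧ ‖b‖ = 1 ∧ 1 + w + w ^ 2 = 0 ∧
      ∃ σ τ : Equiv.Perm (Fin 6), ∀ p q, F6T a b w p q = H (σ p) (τ q) := by
  obtain ⟨hq2, hy2, ω2, hω2a, hw2, hv2, ht2⟩ :=
    rowlem' H hH h0 hc h11 h12 h13 h14 h15 2 (by decide) (by decide)
  obtain ⟨hq3, hy3, ω3, hω3a, hw3, hv3, ht3⟩ :=
    rowlem' H hH h0 hc h11 h12 h13 h14 h15 3 (by decide) (by decide)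
  obtain ⟨hq4, hy4, ω4, hω4a, hw4, hv4, ht4⟩ :=
    rowlem' H hH h0 hc h11 h12 h13 h14 h15 4 (by decide) (by decide)
  obtain ⟨hq5, hy5, ω5, hω5a, hw5, hv5, ht5⟩ :=
    rowlem' H hH h0 hc h11 h12 h13 h14 h15 5 (by decide) (by decide)
  have P23 := pairlem' H hH hc 2 3 (by decide) ω2 ω3 hω2a hω3a hw2 hw3 hq2 hq3 hy2 hy3 hv2 ht2 hv3 ht3
  have P24 := pairlem' H hH hc 2 4 (by decide) ω2 ω4 hω2a hω4a hw2 hw4 hq2 hq4 hy2 hy4 hv2 ht2 hv4 ht4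
  have P25 := pairlem' H hH hc 2 5 (by decide) ω2 ω5 hω2a hω5a hw2 hw5 hq2 hq5 hy2 hy5 hv2 ht2 hv5 ht5
  have P34 := pairlem' H hH hc 3 4 (by decide) ω3 ω4 hω3a hω4a hw3 hw4 hq3 hq4 hy3 hy4 hv3 ht3 hv4 ht4
  have P35 := pairlem' H hH hc 3 5 (by decide) ω3 ω5 hω3a hω5a hw3 hw5 hq3 hq5 hy3 hy5 hv3 ht3 hv5 ht5
  have P45 := pairlem' H hH hc 4 5 (by decide) ω4 ω5 hω4a hω5a hw4 hw5 hq4 hq5 hy4 hy5 hv4 ht4 hv5 ht5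
  by_cases h23 : H 2 1 = H 3 1
  · have hne4 : H 2 1 ≠ H 4 1 := fun h =>
      three_contra' (P23.1 h23).1 (P24.1 h).1 (P34.1 (h23.symm.trans h)).1 (hH.1 2 3)
    have hne5 : H 2 1 ≠ H 5 1 := fun h =>
      three_contra' (P23.1 h23).1 (P25.1 h).1 (P35.1 (h23.symm.trans h)).1 (hH.1 2 3)
    obtain ⟨hx4, hω4e⟩ := P24.2 hne4
    obtain ⟨hx5, hω5e⟩ := P25.2 hne5
    have h45 : H 4 1 = H 5 1 := hx4.trans hx5.symm
    obtain ⟨hu3, hω3e⟩ := P23.1 h23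
    obtain ⟨hu5, hω5f⟩ := P45.1 h45
    exact buildcase' H hH.1 h0 hc h11 h12 h13 h14 h15 2 3 4 5 (by decide) (by decide)
      ω2 ω4 hq2 hw2 hω4e hy2 hy3 hy4 hy5 h23.symm hx4 hx5
      hv2 ht2 (by rw [hv3, hω3e]) (by rw [ht3, hω3e])
      hv4 ht4 (by rw [hv5, hω5f]) (by rw [ht5, hω5f])
      hu3 hu5
  · by_cases h24 : H 2 1 = H 4 1
    · have hne5 : H 2 1 ≠ H 5 1 := fun h =>
        three_contra' (P24.1 h24).1 (P25.1 h).1 (P45.1 (h24.symm.trans h)).1 (hH.1 2 3)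
      obtain ⟨hx3, hω3e⟩ := P23.2 h23
      obtain ⟨hx5, hω5e⟩ := P25.2 hne5
      have h35 : H 3 1 = H 5 1 := hx3.trans hx5.symm
      obtain ⟨hu4, hω4e⟩ := P24.1 h24
      obtain ⟨hu5, hω5f⟩ := P35.1 h35
      exact buildcase' H hH.1 h0 hc h11 h12 h13 h14 h15 2 4 3 5 (by decide) (by decide)
        ω2 ω3 hq2 hw2 hω3e hy2 hy4 hy3 hy5 h24.symm hx3 hx5
        hv2 ht2 (by rw [hv4, hω4e]) (by rw [ht4, hω4e])
        hv3 ht3 (by rw [hv5, hω5f]) (by rw [ht5, hω5f])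
        hu4 hu5
    · obtain ⟨hx3, hω3e⟩ := P23.2 h23
      obtain ⟨hx4, hω4e⟩ := P24.2 h24
      have h34 : H 3 1 = H 4 1 := hx3.trans hx4.symm
      have h25 : H 2 1 = H 5 1 := by
        by_contra h
        obtain ⟨hx5, _⟩ := P25.2 h
        have h35 : H 3 1 = H 5 1 := hx3.trans hx5.symm
        exact three_contra' (P34.1 h34).1 (P35.1 h35).1 (P45.1 (h34.symm.trans h35)).1 (hH.1 3 3)
      obtain ⟨hu5, hω5e⟩ := P25.1 h25
      obtain ⟨hu4, hω4f⟩ := P34.1 h34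
      exact buildcase' H hH.1 h0 hc h11 h12 h13 h14 h15 2 5 3 4 (by decide) (by decide)
        ω2 ω3 hq2 hw2 hω3e hy2 hy5 hy3 hy4 h25.symm hx3 hx4
        hv2 ht2 (by rw [hv5, hω5e]) (by rw [ht5, hω5e])
        hv3 ht3 (by rw [hv4, hω4f]) (by rw [ht4, hω4f])
        hu5 hu4

/-- A normalized complex Hadamard matrix of order 6 containing
three `-1` entries in one of its rows is, up to equivalence, a member of the
transposed Fourier family. -/
theorem stmt_3 (H : Matrix (Fin 6) (Fin 6) ℂ)
    (hH : IsCHM H) (hnorm : Normalized H)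
    (hrow : ∃ i j₁ j₂ j₃ : Fin 6, j₁ ≠ j₂ ∧ j₁ ≠ j₃ ∧ j₂ ≠ j₃ ∧
      H i j₁ = -1 ∧ H i j₂ = -1 ∧ H i j₃ = -1) :
    MemF6T H := by
  obtain ⟨i, j₁, j₂, j₃, hj12, hj13, hj23, e1, e2, e3⟩ := hrow
  obtain ⟨hrow0, hcol0⟩ := hnorm
  have hi0 : i ≠ 0 := by rintro rfl; rw [hrow0 j₁] at e1; norm_num at e1
  have hj10 : j₁ ≠ 0 := by rintro rfl; rw [hcol0 i] at e1; norm_num at e1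
  have hj20 : j₂ ≠ 0 := by rintro rfl; rw [hcol0 i] at e2; norm_num at e2
  have hj30 : j₃ ≠ 0 := by rintro rfl; rw [hcol0 i] at e3; norm_num at e3
  have h4 : ({0, j₁, j₂, j₃} : Finset (Fin 6)).card = 4 := by
    rw [Finset.card_insert_of_notMem (by simp [Ne.symm hj10, Ne.symm hj20, Ne.symm hj30]),
        Finset.card_insert_of_notMem (by simp [hj12, hj13]),
        Finset.card_insert_of_notMem (by simp [hj23]), Finset.card_singleton]
  have hcard : ({0, j₁, j₂, j₃}ᶜ : Finset (Fin 6)).card = 2 := by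
    rw [Finset.card_compl, h4, Fintype.card_fin]
  obtain ⟨k₁, k₂, hk12, hkeq⟩ := Finset.card_eq_two.mp hcard
  have hk1m : k₁ ∈ ({0, j₁, j₂, j₃}ᶜ : Finset (Fin 6)) := by rw [hkeq]; simp
  have hk2m : k₂ ∈ ({0, j₁, j₂, j₃}ᶜ : Finset (Fin 6)) := by rw [hkeq]; simp
  simp only [Finset.mem_compl, Finset.mem_insert, Finset.mem_singleton, not_or] at hk1m hk2m
  obtain ⟨hk10, hk11, hk1j2, hk1j3⟩ := hk1m
  obtain ⟨hk20, hk21, hk2j2, hk2j3⟩ := hk2m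
  have hinjv : Function.Injective ![0, k₁, k₂, j₁, j₂, j₃] := by
    simp only [Matrix.vecCons, Fin.cons_injective_iff]
    refine ⟨?_, ?_, ?_, ?_, ?_, ?_, Function.injective_of_subsingleton _⟩ <;>
      simp_all [Set.mem_range, Fin.exists_fin_succ, eq_comm]
  set τ : Equiv.Perm (Fin 6) :=
    Equiv.ofBijective _ (Finite.injective_iff_bijective.mp hinjv) with hτdef
  set σ : Equiv.Perm (Fin 6) := Equiv.swap 1 i with hσdef
  have hτ0 : τ 0 = 0 := rfl
  have hτ3 : τ 3 = j₁ := rfl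
  have hτ4 : τ 4 = j₂ := rfl
  have hτ5 : τ 5 = j₃ := rfl
  have hσ0 : σ 0 = 0 := Equiv.swap_apply_of_ne_of_ne (by decide) (Ne.symm hi0)
  have hσ1 : σ 1 = i := Equiv.swap_apply_left 1 i
  set M : Matrix (Fin 6) (Fin 6) ℂ := Matrix.of fun p q => H (σ p) (τ q) with hMdef
  have hM : ∀ p q, M p q = H (σ p) (τ q) := fun p q => rfl
  have hMCHM : IsCHM M := by
    constructor
    · intro p q; rw [hM]; exact hH.1 _ _
    · intro p q hpq
      have h1 : ∑ k, M p k * star (M q k)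
          = ∑ k, (fun k => H (σ p) k * star (H (σ q) k)) (τ k) := rfl
      rw [h1, Equiv.sum_comp τ (fun k => H (σ p) k * star (H (σ q) k))]
      exact hH.2 _ _ (fun h => hpq (σ.injective h))
  have hM0 : ∀ j, M 0 j = 1 := fun j => by rw [hM, hσ0]; exact hrow0 _
  have hMc : ∀ p, M p 0 = 1 := fun p => by rw [hM, hτ0]; exact hcol0 _
  have hM13 : M 1 3 = -1 := by rw [hM, hσ1, hτ3]; exact e1
  have hM14 : M 1 4 = -1 := by rw [hM, hσ1, hτ4]; exact e2
  have hM15 : M 1 5 = -1 := by rw [hM, hσ1, hτ5]; exact e3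
  have hsum : M 1 1 + M 1 2 = 2 := by
    have e := hMCHM.2 1 0 (by decide)
    rw [Fin.sum_univ_six] at e
    simp only [hM0, star_one, mul_one] at e
    rw [hMc 1, hM13, hM14, hM15] at e
    linear_combination e
  obtain ⟨hM11, hM12⟩ := sum_two' (hMCHM.1 1 1) (hMCHM.1 1 2) hsum
  obtain ⟨a, b, w, ha, hb, hw, σ', τ', hent⟩ :=
    final' M hMCHM hM0 hMc hM11 hM12 hM13 hM14 hM15
  refine ⟨a, b, w, ha, hb, hw, σ'.trans σ, τ'.trans τ, fun _ => 1, fun _ => 1,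
    fun _ => by simp, fun _ => by simp, fun p q => ?_⟩
  rw [one_mul, one_mul, Equiv.trans_apply, Equiv.trans_apply]
  exact (hent p q).trans (hM _ _)
end
end

section
/- Fix a complex number q₀ of modulus 1 and let r₁, r₂, r₃ be the three rows of R₁(q₀). If s is a row vector of length 6 with unimodular entries that is orthogonal to each of r₁, r₂, r₃, then the pair {r_j, s} is cancelling for every j ∈ {1,2,3}. -/
open Matrix Complex

noncomputable section

private lemma div_pair_aux (x y u v c d : ℂ) (hx : x * u = 1) (hy : y * v = 1)
    (h : c * u + d * v = 0) : c / x + d / y = 0 := by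
  have hx0 : x ≠ 0 := left_ne_zero_of_mul_eq_one hx
  have hy0 : y ≠ 0 := left_ne_zero_of_mul_eq_one hy
  field_simp
  linear_combination x*y*h - c*y*hx - d*x*hy

private lemma r1_key (q Q t0 t1 t2 t3 t4 t5 s0 s1 s2 s3 s4 s5 : ℂ)
    (hq : q * Q = 1)
    (u0 : t0 * s0 = 1) (u1 : t1 * s1 = 1) (u2 : t2 * s2 = 1)
    (u3 : t3 * s3 = 1) (u4 : t4 * s4 = 1) (u5 : t5 * s5 = 1)
    (e1 : t0 + t1 + t2 + t3 + t4 + t5 = 0)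
    (e2 : t0 + I*t1 + t2 - I*t3 - t4 - t5 = 0)
    (e3 : t0 - t1 - I*t2 + I*t3 + q*t4 - q*t5 = 0)
    (f1 : s0 + s1 + s2 + s3 + s4 + s5 = 0)
    (f2 : s0 - I*s1 + s2 + I*s3 - s4 - s5 = 0)
    (f3 : s0 - s1 + I*s2 - I*s3 + Q*s4 - Q*s5 = 0) :
    (t1 - I*t3 = 0 ∧ t0 + t2 = 0) ∨ (t4 + t5 = 0 ∧ t0 - I*t2 = 0) := by
  have hI2 : (I:ℂ)^2 = -1 := Complex.I_sq
  have hD7 : (t0+t2)*(s0+s2) = 1 + (I*(t1*s3 - t3*s1))/2 := by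
    linear_combination ((s0+s2)/2)*e1 + ((s0+s2)/2)*e2 + (-((((1+I)*t1+(1-I)*t3)/2)/2))*f1 + (-((((1+I)*t1+(1-I)*t3)/2)/2))*f2 + (1/2)*u1 + (1/2)*u3 + ((-1/4)*t3*s3 + (1/4)*t3*s1 + (1/4)*t1*s3 + (-1/4)*t1*s1)*hI2
  have hD8 : (t4+t5)*(s4+s5) = 1 - (I*(t1*s3 - t3*s1))/2 := by
    linear_combination ((s4+s5)/2)*e1 + (-((s4+s5)/2))*e2 + (-((((1-I)*t1+(1+I)*t3)/2)/2))*f1 + ((((1-I)*t1+(1+I)*t3)/2)/2)*f2 + (1/2)*u1 + (1/2)*u3 + ((-1/4)*t3*s3 + (1/4)*t3*s1 + (1/4)*t1*s3 + (-1/4)*t1*s1)*hI2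
  have hD9 : (t4-t5)*(s4-s5) = 3 + (I*(t1*s3 - t3*s1))/2 := by
    linear_combination (-1)*hD8 + (2)*u4 + (2)*u5
  have hD10 : ((t1 - I*t3 - q*(t4-t5)) - I*(((1+I)*t1+(1-I)*t3)/2)) * ((s1 + I*s3 - Q*(s4-s5)) + I*(((1-I)*s1+(1+I)*s3)/2)) = 2 := by
    linear_combination (-((s1 + I*s3 - Q*(s4-s5)) + I*(((1-I)*s1+(1+I)*s3)/2)))*e3 + (-(I*((s1 + I*s3 - Q*(s4-s5)) + I*(((1-I)*s1+(1+I)*s3)/2))/2))*e1 + (-(I*((s1 + I*s3 - Q*(s4-s5)) + I*(((1-I)*s1+(1+I)*s3)/2))/2))*e2 + (-((1+I)*t0))*f3 + (I*(1+I)*t0/2)*f1 + (I*(1+I)*t0/2)*f2 + (2)*u0 + (-t0*s0)*hI2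
  have hD11 : ((t1 - I*t3 - q*(t4-t5)) + (((1+I)*t1+(1-I)*t3)/2)) * ((s1 + I*s3 - Q*(s4-s5)) + (((1-I)*s1+(1+I)*s3)/2)) = 2 := by
    linear_combination (-((s1 + I*s3 - Q*(s4-s5)) + (((1-I)*s1+(1+I)*s3)/2)))*e3 + (((s1 + I*s3 - Q*(s4-s5)) + (((1-I)*s1+(1+I)*s3)/2))/2)*e1 + (((s1 + I*s3 - Q*(s4-s5)) + (((1-I)*s1+(1+I)*s3)/2))/2)*e2 + ((1+I)*t2)*f3 + (-((1+I)*t2/2))*f1 + (-((1+I)*t2/2))*f2 + (2)*u2 + (-t2*s2)*hI2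
  have hD13 : (t1 - I*t3 - q*(t4-t5))*(((1-I)*s1+(1+I)*s3)/2) + I*((((1+I)*t1+(1-I)*t3)/2)*(s1 + I*s3 - Q*(s4-s5))) = 0 := by
    linear_combination ((-1-I)/2)*hD10 + ((1+I)/2)*hD11 + ((1/4)*t5*s3*q + (1/4)*t5*s3*q*I + (1/4)*t5*s1*q + (-1/4)*t5*s1*q*I + (-1/4)*t4*s3*q + (-1/4)*t4*s3*q*I + (-1/4)*t4*s1*q + (1/4)*t4*s1*q*I + (-1/4)*t3*s5*Q + (1/4)*t3*s5*Q*I + (1/4)*t3*s4*Q + (-1/4)*t3*s4*Q*I + (-1/8)*t3*s3 + (-5/8)*t3*s3*I + (1/8)*t3*s3*I^2 + (1/8)*t3*s3*I^3 + (-3/8)*t3*s1 + (1/8)*t3*s1*I + (3/8)*t3*s1*I^2 + (-1/8)*t3*s1*I^3 + (-1/4)*t1*s5*Q + (-1/4)*t1*s5*Q*I + (1/4)*t1*s4*Q + (1/4)*t1*s4*Q*I + (1/8)*t1*s3 + (-3/8)*t1*s3*I + (-5/8)*t1*s3*I^2 + (-1/8)*t1*s3*I^3 + (-1/8)*t1*s1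 + (-5/8)*t1*s1*I + (1/8)*t1*s1*I^2 + (1/8)*t1*s1*I^3)*hI2
  have hD14 : (t1 - I*t3 - q*(t4-t5))*(s1 + I*s3 - Q*(s4-s5)) + (1-I)*((((1+I)*t1+(1-I)*t3)/2)*(s1 + I*s3 - Q*(s4-s5))) = 1 - (I*(t1*s3 - t3*s1))/2 := by
    linear_combination (1/2)*hD10 + (1/2)*hD11 + (-((1+I)/2))*hD13 + (-(1/2))*u1 + (-(1/2))*u3 + ((1/4)*t3*s5*Q + (-1/4)*t3*s5*Q*I + (-1/4)*t3*s4*Q + (1/4)*t3*s4*Q*I + (3/8)*t3*s3 + (1/4)*t3*s3*I + (-3/8)*t3*s3*I^2 + (1/8)*t3*s1 + (-1/2)*t3*s1*I + (1/8)*t3*s1*I^2 + (1/4)*t1*s5*Q + (1/4)*t1*s5*Q*I + (-1/4)*t1*s4*Q + (-1/4)*t1*s4*Q*I + (-1/8)*t1*s3 + (1/2)*t1*s3*I + (3/8)*t1*s3*I^2 + (5/8)*t1*s1 + (1/4)*t1*s1*I + (-1/8)*t1*s1*I^2)*hI2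
  have hD16 : (q*(t4-t5)*(((1-I)*s1+(1+I)*s3)/2)) * (Q*(((1+I)*t1+(1-I)*t3)/2)*(s4-s5)) = (3 + (I*(t1*s3 - t3*s1))/2)*(1 + (I*(t1*s3 - t3*s1))/2) := by
    linear_combination ((t4-t5)*(s4-s5)*(((1+I)*t1+(1-I)*t3)/2)*(((1-I)*s1+(1+I)*s3)/2))*hq + ((((1+I)*t1+(1-I)*t3)/2)*(((1-I)*s1+(1+I)*s3)/2))*hD9 + ((3 + (I*(t1*s3 - t3*s1))/2)/2)*u1 + ((3 + (I*(t1*s3 - t3*s1))/2)/2)*u3 + ((-3/4)*t3*s3 + (3/4)*t3*s1 + (1/8)*t3^2*s1*s3*I + (-1/8)*t3^2*s1^2*I + (3/4)*t1*s3 + (-3/4)*t1*s1 + (-1/8)*t1*t3*s3^2*I + (1/8)*t1*t3*s1^2*I + (1/8)*t1^2*s3^2*I + (-1/8)*t1^2*s1*s3*I)*hI2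
  have hD17 : (3-3*I)*(Q*(((1+I)*t1+(1-I)*t3)/2)*(s4-s5)) = 6 + 3*(I*(t1*s3 - t3*s1)) := by
    linear_combination (-1)*hD14 + (1+I)*hD13 + (2)*u1 + (2)*u3 + (1)*hD9 + ((t4-t5)*(s4-s5))*hq + ((-1/2)*t5*s3*q + (1/2)*t5*s1*q + (1/2)*t4*s3*q + (-1/2)*t4*s1*q - t3*s5*Q + (1/2)*t3*s5*Q*I + t3*s4*Q + (-1/2)*t3*s4*Q*I + (-2)*t3*s3 + t3*s3*I + (1/2)*t3*s3*I^2 + (1/2)*t3*s1 + (-1/2)*t1*s5*Q*I + (1/2)*t1*s4*Q*I + (-1/2)*t1*s3 + (-3/2)*t1*s3*I + (-1/2)*t1*s3*I^2 - t1*s1 + (-1/2)*t1*s1*I)*hI2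
  have hD18 : (I*(t1*s3 - t3*s1))^2 = 4 := by
    linear_combination (4)*hD16 + (((2*I-2)/3)*((Q*(((1+I)*t1+(1-I)*t3)/2)*(s4-s5)) + (2+(I*(t1*s3 - t3*s1)))*(1+I)/2))*hD17 + (4*(Q*(((1+I)*t1+(1-I)*t3)/2)*(s4-s5)))*hD13 + (4 + t3*s5*Q + (-2)*t3*s5*Q*I + t3*s5*Q*I^2 - t3*s4*Q + 2*t3*s4*Q*I - t3*s4*Q*I^2 + (-4)*t3*s1*I + (1/2)*t3^2*s5^2*Q^2 - t3^2*s5^2*Q^2*I + (1/2)*t3^2*s5^2*Q^2*I^2 - t3^2*s4*s5*Q^2 + 2*t3^2*s4*s5*Q^2*I - t3^2*s4*s5*Q^2*I^2 + (1/2)*t3^2*s4^2*Q^2 - t3^2*s4^2*Q^2*I + (1/2)*t3^2*s4^2*Q^2*I^2 + 0*t3^2*s3*s5*Q - t3^2*s3*s5*Q*I + t3^2*s3*s5*Q*I^2 + 0*t3^2*s3*s4*Q + t3^2*s3*s4*Q*I - t3^2*s3*s4*Q*I^2 + 0*t3^2*s1*s5*Q + (-1/2)*t3^2*s1*s5*Q*I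 + t3^2*s1*s5*Q*I^2 + (-1/2)*t3^2*s1*s5*Q*I^3 + 0*t3^2*s1*s4*Q + (1/2)*t3^2*s1*s4*Q*I - t3^2*s1*s4*Q*I^2 + (1/2)*t3^2*s1*s4*Q*I^3 + 0*t3^2*s1^2 + t3^2*s1^2*I^2 + t1*s5*Q - t1*s5*Q*I^2 - t1*s4*Q + t1*s4*Q*I^2 + 4*t1*s3*I + t1*t3*s5^2*Q^2 - t1*t3*s5^2*Q^2*I^2 + (-2)*t1*t3*s4*s5*Q^2 + 2*t1*t3*s4*s5*Q^2*I^2 + t1*t3*s4^2*Q^2 - t1*t3*s4^2*Q^2*I^2 + t1*t3*s3*s5*Q + (-1/2)*t1*t3*s3*s5*Q*I + (-3)*t1*t3*s3*s5*Q*I^2 + (1/2)*t1*t3*s3*s5*Q*I^3 - t1*t3*s3*s4*Q + (1/2)*t1*t3*s3*s4*Q*I + 3*t1*t3*s3*s4*Q*I^2 + (-1/2)*t1*t3*s3*s4*Q*I^3 + t1*t3*s1*s5*Q + (-3/2)*t1*t3*s1*s5*Q*I + (1/2)*t1*t3*s1*s5*Q*I^3 - t1*t3*s1*s4*Q + (3/2)*t1*t3*s1*s4*Q*I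 + (-1/2)*t1*t3*s1*s4*Q*I^3 + 0*t1*t3*s1*s3 + (-2)*t1*t3*s1*s3*I^2 + (1/2)*t1^2*s5^2*Q^2 + t1^2*s5^2*Q^2*I + (1/2)*t1^2*s5^2*Q^2*I^2 - t1^2*s4*s5*Q^2 + (-2)*t1^2*s4*s5*Q^2*I - t1^2*s4*s5*Q^2*I^2 + (1/2)*t1^2*s4^2*Q^2 + t1^2*s4^2*Q^2*I + (1/2)*t1^2*s4^2*Q^2*I^2 + t1^2*s3*s5*Q + (5/2)*t1^2*s3*s5*Q*I + t1^2*s3*s5*Q*I^2 + (-1/2)*t1^2*s3*s5*Q*I^3 - t1^2*s3*s4*Q + (-5/2)*t1^2*s3*s4*Q*I - t1^2*s3*s4*Q*I^2 + (1/2)*t1^2*s3*s4*Q*I^3 + 0*t1^2*s3^2 + t1^2*s3^2*I^2 + t1^2*s1*s5*Q + t1^2*s1*s5*Q*I - t1^2*s1*s4*Q - t1^2*s1*s4*Q*I)*hI2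
  have hD19 : (t1^2 + t3^2)^2 = 0 := by
    linear_combination (-(t1^2*t3^2))*hD18 + ((I*t1^2*(t3*s3-1) - I*t3^2*(t1*s1-1) + 2*I*(t1^2-t3^2))*I*t1^2)*u3 + (-((I*t1^2*(t3*s3-1) - I*t3^2*(t1*s1-1) + 2*I*(t1^2-t3^2))*I*t3^2))*u1 + (t3^4 + (-2)*t1^2*t3^2 + t1^4)*hI2
  have hD21 : (t1 - I*t3)*(t1 + I*t3) = 0 := by
    linear_combination sq_eq_zero_iff.mp hD19 - t3^2*hI2
  rcases mul_eq_zero.mp hD21 with hA | hB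
  · have a1 : (t0+t2)*(s0+s2) = 0 := by
      linear_combination (1)*hD7 + ((I*s3+s1)/2)*hA + (-(1/2))*u3 + (-(1/2))*u1 + ((1/2)*t3*s3)*hI2
    have a2 : (t0+t2)^2 = 0 := by
      linear_combination (t0*t2)*a1 + (-((t0+t2)*t2))*u0 + (-((t0+t2)*t0))*u2
    exact Or.inl ⟨hA, sq_eq_zero_iff.mp a2⟩
  · have b1 : (t4+t5)*(s4+s5) = 0 := by
      linear_combination (1)*hD8 + (-((I*s3-s1)/2))*hB + (-(1/2))*u3 + (-(1/2))*u1 + ((1/2)*t3*s3)*hI2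
    have b2 : (t4+t5)^2 = 0 := by
      linear_combination (t4*t5)*b1 + (-((t4+t5)*t5))*u4 + (-((t4+t5)*t4))*u5
    have ht45 : t4 + t5 = 0 := sq_eq_zero_iff.mp b2
    have b3 : (t0-I*t2)*(t0+I*t2) = 0 := by
      linear_combination (t0*t2)*hD7 + (t0*t2*(I*s3-s1)/2)*hB + (t0*t2/2)*u3 + (t0*t2/2)*u1 + (-(t0*t2+t0^2))*u2 + (-(t0*t2+t2^2))*u0 + (-t2^2 + (-1/2)*t0*t2*t3*s3)*hI2
    rcases mul_eq_zero.mp b3 with hB1 | hB2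
    · exact Or.inr ⟨ht45, hB1⟩
    · exfalso
      have c1 : t2 + t3 = 0 := by
        linear_combination ((1+I)/4)*e1 + ((1+I)/4)*e2 + (-((1+I)/2))*hB2 + (-(I/2))*hB + ((3/4)*t3 + (1/2)*t2 + (-1/4)*t1)*hI2
      have c3 : q*t4 + 2*I*t3 = 0 := by
        linear_combination (1/2)*e3 + (-(1/2))*hB2 + (1/2)*hB + (I)*c1 + (q/2)*ht45
      have d1 : s1 - I*s3 = 0 := by
        linear_combination (-(I*s1*s3))*hB + (I*s3)*u1 + (-s1)*u3 + (t3*s1*s3)*hI2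
      have d0 : s0 - I*s2 = 0 := by
        linear_combination (-(I*s0*s2))*hB2 + (I*s2)*u0 + (-s0)*u2 + (t2*s0*s2)*hI2
      have d2 : s2 + s3 = 0 := by
        linear_combination (s2*s3)*c1 + (-s3)*u2 + (-s2)*u3
      have d4 : s4 + s5 = 0 := by
        linear_combination (s4*s5)*ht45 + (-s5)*u4 + (-s4)*u5
      have c4 : Q*s4 + 2*I*s2 = 0 := by
        linear_combination (1/2)*f3 + (-(1/2))*d0 + (1/2)*d1 + (Q/2)*d4 + (I)*d2
      have hcon : (1:ℂ) = 4 := by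
        linear_combination (-(t4*s4))*hq + (-1)*u4 + (4)*u2 + (-(4*s2))*c1 + (Q*s4)*c3 + (-(2*I*t3))*c4 + (4*t3*s2)*hI2
      exact absurd hcon (by norm_num)

/-- Any unimodular row orthogonal to all three rows of `R₁(q₀)`
is cancelling with each row of `R₁(q₀)`. -/
theorem stmt_7 (q₀ : ℂ) (hq : ‖q₀‖ = 1)
    (s : Fin 6 → ℂ) (hs : ∀ k, ‖s k‖ = 1)
    (horth : ∀ j : Fin 3, ∑ k, R1 q₀ j k * star (s k) = 0) :
    ∀ j : Fin 3, Cancelling (R1 q₀ j) s := by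
  have hu : ∀ k, s k * (starRingEnd ℂ) (s k) = 1 := fun k => by
    rw [Complex.mul_conj, Complex.normSq_eq_norm_sq, hs k]; norm_num
  have hu' : ∀ k, (starRingEnd ℂ) (s k) * s k = 1 := fun k => by
    rw [mul_comm]; exact hu k
  have hQ : q₀ * (starRingEnd ℂ) q₀ = 1 := by
    rw [Complex.mul_conj, Complex.normSq_eq_norm_sq, hq]; norm_num
  have ext : ∀ j : Fin 3,
      R1 q₀ j 0 * (starRingEnd ℂ) (s 0) + R1 q₀ j 1 * (starRingEnd ℂ) (s 1)
      + R1 q₀ j 2 * (starRingEnd ℂ) (s 2) + R1 q₀ j 3 * (starRingEnd ℂ) (s 3)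
      + R1 q₀ j 4 * (starRingEnd ℂ) (s 4) + R1 q₀ j 5 * (starRingEnd ℂ) (s 5) = 0 := by
    intro j
    have e := horth j
    rw [Fin.sum_univ_six] at e
    simpa only [Complex.star_def] using e
  have e1 : (starRingEnd ℂ) (s 0) + (starRingEnd ℂ) (s 1) + (starRingEnd ℂ) (s 2)
      + (starRingEnd ℂ) (s 3) + (starRingEnd ℂ) (s 4) + (starRingEnd ℂ) (s 5) = 0 := by
    have e := ext 0
    simp only [R1, Matrix.of_apply, Matrix.cons_val', Matrix.cons_val_zero, Matrix.cons_val_one,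
      Matrix.head_cons, Matrix.head_fin_const, Matrix.empty_val', Matrix.cons_val_fin_one,
      Matrix.cons_val_two, Matrix.tail_cons, Matrix.cons_val_three, Matrix.cons_val_four,
      show ((5:Fin 6)) = (4:Fin 5).succ from rfl, Matrix.cons_val_succ] at e
    simp only [show (Fin.succ 4 : Fin 6) = 5 from rfl] at e
    linear_combination e
  have e2 : (starRingEnd ℂ) (s 0) + I * (starRingEnd ℂ) (s 1) + (starRingEnd ℂ) (s 2)
      - I * (starRingEnd ℂ) (s 3) - (starRingEnd ℂ) (s 4) - (starRingEnd ℂ) (s 5) = 0 := by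
    have e := ext 1
    simp only [R1, Matrix.of_apply, Matrix.cons_val', Matrix.cons_val_zero, Matrix.cons_val_one,
      Matrix.head_cons, Matrix.head_fin_const, Matrix.empty_val', Matrix.cons_val_fin_one,
      Matrix.cons_val_two, Matrix.tail_cons, Matrix.cons_val_three, Matrix.cons_val_four,
      show ((5:Fin 6)) = (4:Fin 5).succ from rfl, Matrix.cons_val_succ] at e
    simp only [show (Fin.succ 4 : Fin 6) = 5 from rfl] at e
    linear_combination e
  have e3 : (starRingEnd ℂ) (s 0) - (starRingEnd ℂ) (s 1) - I * (starRingEnd ℂ) (s 2)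
      + I * (starRingEnd ℂ) (s 3) + q₀ * (starRingEnd ℂ) (s 4)
      - q₀ * (starRingEnd ℂ) (s 5) = 0 := by
    have e := ext 2
    simp only [R1, Matrix.of_apply, Matrix.cons_val', Matrix.cons_val_zero, Matrix.cons_val_one,
      Matrix.head_cons, Matrix.head_fin_const, Matrix.empty_val', Matrix.cons_val_fin_one,
      Matrix.cons_val_two, Matrix.tail_cons, Matrix.cons_val_three, Matrix.cons_val_four,
      show ((5:Fin 6)) = (4:Fin 5).succ from rfl, Matrix.cons_val_succ] at e
    simp only [show (Fin.succ 4 : Fin 6) = 5 from rfl] at e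
    linear_combination e
  have f1 : s 0 + s 1 + s 2 + s 3 + s 4 + s 5 = 0 := by
    have e := congrArg (starRingEnd ℂ) e1
    simp only [map_add, map_zero, Complex.conj_conj] at e
    linear_combination e
  have f2 : s 0 - I * s 1 + s 2 + I * s 3 - s 4 - s 5 = 0 := by
    have e := congrArg (starRingEnd ℂ) e2
    simp only [map_add, map_sub, _root_.map_mul, map_zero, Complex.conj_conj, Complex.conj_I] at e
    linear_combination e
  have f3 : s 0 - s 1 + I * s 2 - I * s 3 + (starRingEnd ℂ) q₀ * s 4
      - (starRingEnd ℂ) q₀ * s 5 = 0 := by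
    have e := congrArg (starRingEnd ℂ) e3
    simp only [map_add, map_sub, _root_.map_mul, map_zero, Complex.conj_conj, Complex.conj_I] at e
    linear_combination e
  have key := r1_key q₀ ((starRingEnd ℂ) q₀)
    ((starRingEnd ℂ) (s 0)) ((starRingEnd ℂ) (s 1)) ((starRingEnd ℂ) (s 2))
    ((starRingEnd ℂ) (s 3)) ((starRingEnd ℂ) (s 4)) ((starRingEnd ℂ) (s 5))
    (s 0) (s 1) (s 2) (s 3) (s 4) (s 5) hQ
    (hu' 0) (hu' 1) (hu' 2) (hu' 3) (hu' 4) (hu' 5) e1 e2 e3 f1 f2 f3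
  intro j
  rcases key with ⟨h13, h02⟩ | ⟨h45, h02⟩
  · fin_cases j
    · exact ⟨0, 2, by decide, div_pair_aux (s 0) (s 2) _ _ 1 1 (hu 0) (hu 2)
        (by linear_combination h02)⟩
    · exact ⟨0, 2, by decide, div_pair_aux (s 0) (s 2) _ _ 1 1 (hu 0) (hu 2)
        (by linear_combination h02)⟩
    · exact ⟨1, 3, by decide, div_pair_aux (s 1) (s 3) _ _ (-1) I (hu 1) (hu 3)
        (by linear_combination -h13)⟩
  · fin_cases j
    · exact ⟨4, 5, by decide, div_pair_aux (s 4) (s 5) _ _ 1 1 (hu 4) (hu 5)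
        (by linear_combination h45)⟩
    · exact ⟨4, 5, by decide, div_pair_aux (s 4) (s 5) _ _ (-1) (-1) (hu 4) (hu 5)
        (by linear_combination -h45)⟩
    · exact ⟨0, 2, by decide, div_pair_aux (s 0) (s 2) _ _ 1 (-I) (hu 0) (hu 2)
        (by linear_combination h02)⟩
end
end

section
/- Let H be a complex Hadamard matrix of order 6 whose upper-left 4×4 submatrix has rows (1,1,1,1), (1,−1,1,−1), (1,b,p,q), (1,−b,w,−qw/p). Then (b−qw)(1+w+w²)=0. -/
open Matrix Complex

noncomputable section

private lemma cancel_left {A M : ℂ} (hM : M ≠ 0) (h : M * A = 0) : A = 0 := by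
  rcases mul_eq_zero.mp h with h | h
  exacts [absurd h hM, h]

private lemma star_eq_inv' {z : ℂ} (h : ‖z‖ = 1) : star z = z⁻¹ := by
  rw [Complex.star_def, ← Complex.inv_eq_conj h]

private lemma ne_zero_of_abs_one {z : ℂ} (h : ‖z‖ = 1) : z ≠ 0 := by
  intro h0; rw [h0] at h; simp at h

private 
lemma key_alg (a0 a1 y0 y1 z0 z1 t0 t1 b p q w : ℂ)
    (na0 : a0 ≠ 0) (na1 : a1 ≠ 0) (ny0 : y0 ≠ 0) (ny1 : y1 ≠ 0)
    (nz0 : z0 ≠ 0) (nz1 : z1 ≠ 0) (nt0 : t0 ≠ 0) (nt1 : t1 ≠ 0)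
    (nb : b ≠ 0) (np : p ≠ 0) (nq : q ≠ 0) (nw : w ≠ 0)
    (h1 : y0*a1 + y1*a0 = 0)
    (h2 : (1+b+p+q)*(a0*a1) + z0*a1 + z1*a0 = 0)
    (h3 : (b*p*q+p*q+b*q+b*p)*(z0*z1) + b*p*q*(a0*z1 + a1*z0) = 0)
    (h4 : (1-b+p-q)*(y0*y1) + z0*y1 + z1*y0 = 0)
    (h5 : (b*p*q-p*q+b*q-b*p)*(z0*z1) + b*p*q*(y0*z1 + y1*z0) = 0)
    (h6 : ((1-b+w)*p - q*w)*(a0*a1) + p*(t0*a1 + t1*a0) = 0)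
    (h7 : (b*q*w-q*w+b*q-b*p)*(t0*t1) + b*q*w*(a0*t1 + a1*t0) = 0)
    (h8 : ((1+b+w)*p + q*w)*(y0*y1) + p*(t0*y1 + t1*y0) = 0)
    (h9 : (b*q*w+q*w+b*q+b*p)*(t0*t1) + b*q*w*(y0*t1 + y1*t0) = 0)
    (h10 : t0*z1 + t1*z0 = 0) :
    (b - q*w) * (1 + w + w^2) = 0 := by
  have cancel : ∀ A M : ℂ, M ≠ 0 → A * M = 0 → A = 0 := by
    intro A M hM h
    rcases mul_eq_zero.mp h with h | h
    exacts [h, absurd h hM]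
  have LK1 : ((1+b+p+q) * ((q-b*p)*(b-q*w))) * (2*p*a0^2*a1^2*y1*z0*z1) = 0 := by
    linear_combination ((1) * a0*a1*y1*z0*z1*b^2*p^2*q + (1) * a0*a1*y1*z0*z1*b*p^2*q*w + (1) * a0*a1*y1*z0*z1*b*p^2*q + (1) * a0*a1*y1*z0*z1*b*p*q^2*w + (1) * a0*z0*z1^2*t1*b*p^2*q + (1) * a0*z0*z1^2*t1*b*p^2 + (1) * a0*z0*z1^2*t1*b*p*q + (1) * a0*z0*z1^2*t1*p^2*q + (1) * a1^2*y1*z0^2*b^2*p^2*q + (1) * a1^2*y1*z0^2*b*p^2*q*w + (1) * a1^2*y1*z0^2*b*p^2*q + (1) * a1^2*y1*z0^2*b*p*q^2*w + (-1) * a1*y0*z0*z1^2*b^2*p^2*q + (-1) * a1*y0*z0*z1^2*b^2*p^2 + (-1) * a1*y0*z0*z1^2*b^2*p*q + (-1) * a1*y0*z0*z1^2*b*p^2*q*w + (-2) * a1*y0*z0*z1^2*b*p^2*q + (-1) * a1*y0*z0*z1^2*b*p^2*w + (-1) * a1*y0*z0*z1^2*b*p^2 + (-1) * a1*y0*z0*z1^2*b*p*q^2*w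 + (-2) * a1*y0*z0*z1^2*b*p*q*w + (-1) * a1*y0*z0*z1^2*b*p*q + (-1) * a1*y0*z0*z1^2*b*q^2*w + (-1) * a1*y0*z0*z1^2*p^2*q*w + (-1) * a1*y0*z0*z1^2*p^2*q + (-1) * a1*y0*z0*z1^2*p*q^2*w + (-1) * a1*y0*z0*z1*t1*b^2*p^2*q + (-1) * a1*y0*z0*z1*t1*b^2*p^2 + (-1) * a1*y0*z0*z1*t1*b^2*p*q + (1) * a1*y0*z0*z1*t1*b*p^3*q + (1) * a1*y0*z0*z1*t1*b*p^3 + (-1) * a1*y0*z0*z1*t1*b*p^2*q^2 + (1) * a1*y0*z0*z1*t1*b*p^2 + (-1) * a1*y0*z0*z1*t1*b*p*q^2 + (1) * a1*y0*z0*z1*t1*b*p*q + (1) * a1*y0*z0*z1*t1*p^3*q + (-1) * a1*y0*z0*z1*t1*p^2*q^2 + (1) * a1*y0*z0*z1*t1*p^2*q + (-1) * a1*z0*z1^2*t0*b*p^2*q + (-1) * a1*z0*z1^2*t0*b*p^2 + (-1) * a1*z0*z1^2*t0*b*p*q + (-1) * a1*z0*z1^2*t0*p^2*q) * h1 + ((1)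 * a0*a1*y1*z0*z1*b^2*p^2*q + (-1) * a0*a1*y1*z0*z1*b^2*p^2 + (1) * a0*a1*y1*z0*z1*b^2*p*q + (1) * a0*a1*y1*z0*z1*b*p^2*q*w + (-1) * a0*a1*y1*z0*z1*b*p^2*w + (-1) * a0*a1*y1*z0*z1*b*p^2 + (1) * a0*a1*y1*z0*z1*b*p*q^2*w + (1) * a0*a1*y1*z0*z1*b*p*q + (1) * a0*a1*y1*z0*z1*b*q^2*w + (-1) * a0*a1*y1*z0*z1*p^2*q*w + (-1) * a0*a1*y1*z0*z1*p^2*q + (-1) * a0*a1*y1*z0*z1*p*q^2*w + (-1) * a0*y1*z0*z1*t1*b*p^2*q + (-1) * a0*y1*z0*z1*t1*b*p^2 + (-1) * a0*y1*z0*z1*t1*b*p*q + (-1) * a0*y1*z0*z1*t1*p^2*q + (-1) * a1*y1*z0*z1*t0*b*p^2*q + (-1) * a1*y1*z0*z1*t0*b*p^2 + (-1) * a1*y1*z0*z1*t0*b*p*q + (-1) * a1*y1*z0*z1*t0*p^2*q) * h2 + ((1) * a0*a1*y0*y1*z1*b*p + (1) * a0*a1*y0*y1*z1*p*w + (1) *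 a0*a1*y0*y1*z1*p + (1) * a0*a1*y0*y1*z1*q*w + (-1) * a1^2*y0*y1*z0*b*p + (-1) * a1^2*y0*y1*z0*p*w + (-1) * a1^2*y0*y1*z0*p + (-1) * a1^2*y0*y1*z0*q*w) * h3 + ((-1) * a0*a1*z0*z1*t1*b*p^2*q + (-1) * a0*a1*z0*z1*t1*b*p^2 + (-1) * a0*a1*z0*z1*t1*b*p*q + (-1) * a0*a1*z0*z1*t1*p^2*q + (1) * a1^2*y0*z0*z1*b^2*p^2*q + (1) * a1^2*y0*z0*z1*b^2*p^2 + (1) * a1^2*y0*z0*z1*b^2*p*q + (1) * a1^2*y0*z0*z1*b*p^2*q*w + (2) * a1^2*y0*z0*z1*b*p^2*q + (1) * a1^2*y0*z0*z1*b*p^2*w + (1) * a1^2*y0*z0*z1*b*p^2 + (1) * a1^2*y0*z0*z1*b*p*q^2*w + (2) * a1^2*y0*z0*z1*b*p*q*w + (1) * a1^2*y0*z0*z1*b*p*q + (1) * a1^2*y0*z0*z1*b*q^2*w + (1) * a1^2*y0*z0*z1*p^2*q*w + (1) * a1^2*y0*z0*z1*p^2*q + (1) * a1^2*y0*z0*z1*p*q^2*w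 + (1) * a1^2*z0*z1*t0*b*p^2*q + (1) * a1^2*z0*z1*t0*b*p^2 + (1) * a1^2*z0*z1*t0*b*p*q + (1) * a1^2*z0*z1*t0*p^2*q) * h4 + ((-1) * a0^2*a1*y1*z1*b*p + (-1) * a0^2*a1*y1*z1*p*w + (-1) * a0^2*a1*y1*z1*p + (-1) * a0^2*a1*y1*z1*q*w + (-1) * a0*a1^2*y1*z0*b*p + (-1) * a0*a1^2*y1*z0*p*w + (-1) * a0*a1^2*y1*z0*p + (-1) * a0*a1^2*y1*z0*q*w) * h5 + ((1) * a0*a1*y1*z0*z1*b^2*p*q + (1) * a0*a1*y1*z0*z1*b^2*p + (1) * a0*a1*y1*z0*z1*b^2*q + (1) * a0*a1*y1*z0*z1*b*p^2*q + (1) * a0*a1*y1*z0*z1*b*p^2 + (1) * a0*a1*y1*z0*z1*b*p*q^2 + (4) * a0*a1*y1*z0*z1*b*p*q + (1) * a0*a1*y1*z0*z1*b*p + (1) * a0*a1*y1*z0*z1*b*q^2 + (1) * a0*a1*y1*z0*z1*b*q + (1) * a0*a1*y1*z0*z1*p^2*q + (1) * a0*a1*y1*z0*z1*p*q^2 + (1)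 * a0*a1*y1*z0*z1*p*q) * h6 + ((1) * a1^2*y0*z0*z1*b^2*p*q + (1) * a1^2*y0*z0*z1*b^2*p + (1) * a1^2*y0*z0*z1*b^2*q + (-1) * a1^2*y0*z0*z1*b*p^2*q + (-1) * a1^2*y0*z0*z1*b*p^2 + (1) * a1^2*y0*z0*z1*b*p*q^2 + (-1) * a1^2*y0*z0*z1*b*p + (1) * a1^2*y0*z0*z1*b*q^2 + (-1) * a1^2*y0*z0*z1*b*q + (-1) * a1^2*y0*z0*z1*p^2*q + (1) * a1^2*y0*z0*z1*p*q^2 + (-1) * a1^2*y0*z0*z1*p*q) * h8 + ((2) * a0*a1*y1*z0*z1*b*p^2*q + (2) * a0*a1*y1*z0*z1*b*p^2 + (2) * a0*a1*y1*z0*z1*b*p*q + (2) * a0*a1*y1*z0*z1*p^2*q) * h10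
  have LK2 : (((1-b+w)*p-q*w) * ((1+b+p+q)*(b*q*w-q*w+b*q-b*p) + (1-b+p-q)*(b*q*w+q*w+b*q+b*p))) * (a0^2*a1^2*y1*t0*t1) = 0 := by
    linear_combination ((-1) * a0*a1*y1*t0*t1*b^2*p*q*w + (1) * a0*a1*y1*t0*t1*b*p^2*q*w + (-1) * a0*a1*y1*t0*t1*b*p*q^2*w + (1) * a0*a1*y1*t0*t1*b*p*q*w + (-1) * a0*z1*t0*t1^2*b*p^2 + (1) * a0*z1*t0*t1^2*b*p*q*w + (1) * a0*z1*t0*t1^2*b*p*q + (-1) * a0*z1*t0*t1^2*p*q*w + (-1) * a1^2*y1*t0^2*b^2*p*q*w + (1) * a1^2*y1*t0^2*b*p^2*q*w + (-1) * a1^2*y1*t0^2*b*p*q^2*w + (1) * a1^2*y1*t0^2*b*p*q*w + (1) * a1*z1*t0^2*t1*b*p^2 + (-1) * a1*z1*t0^2*t1*b*p*q*w + (-1) * a1*z1*t0^2*t1*b*p*q + (1) * a1*z1*t0^2*t1*p*q*w) * h1 + ((1) * a0*y1*t0*t1^2*b*p^2 + (-1) * a0*y1*t0*t1^2*b*p*q*w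 + (-1) * a0*y1*t0*t1^2*b*p*q + (1) * a0*y1*t0*t1^2*p*q*w + (1) * a1*y1*t0^2*t1*b*p^2 + (-1) * a1*y1*t0^2*t1*b*p*q*w + (-1) * a1*y1*t0^2*t1*b*p*q + (1) * a1*y1*t0^2*t1*p*q*w) * h2 + ((1) * a0*a1*t0*t1^2*b*p^2 + (-1) * a0*a1*t0*t1^2*b*p*q*w + (-1) * a0*a1*t0*t1^2*b*p*q + (1) * a0*a1*t0*t1^2*p*q*w + (-1) * a1^2*t0^2*t1*b*p^2 + (1) * a1^2*t0^2*t1*b*p*q*w + (1) * a1^2*t0^2*t1*b*p*q + (-1) * a1^2*t0^2*t1*p*q*w) * h4 + ((-2) * a0*a1*y1*t0*t1*b^2*p + (2) * a0*a1*y1*t0*t1*b*p*q*w + (2) * a0*a1*y1*t0*t1*b*q + (-2) * a0*a1*y1*t0*t1*q^2*w) * h6 + ((-1) * a0*a1*y0*y1*t1*b*p + (1) * a0*a1*y0*y1*t1*p^2 + (-1) * a0*a1*y0*y1*t1*p*q + (1) * a0*a1*y0*y1*t1*p + (1) * a1^2*y0*y1*t0*b*p + (-1) * a1^2*y0*y1*t0*p^2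 + (1) * a1^2*y0*y1*t0*p*q + (-1) * a1^2*y0*y1*t0*p) * h7 + ((1) * a0^2*a1*y1*t1*b*p + (-1) * a0^2*a1*y1*t1*p^2 + (1) * a0^2*a1*y1*t1*p*q + (-1) * a0^2*a1*y1*t1*p + (1) * a0*a1^2*y1*t0*b*p + (-1) * a0*a1^2*y1*t0*p^2 + (1) * a0*a1^2*y1*t0*p*q + (-1) * a0*a1^2*y1*t0*p) * h9 + ((-2) * a0*a1*y1*t0*t1*b*p^2 + (2) * a0*a1*y1*t0*t1*b*p*q*w + (2) * a0*a1*y1*t0*t1*b*p*q + (-2) * a0*a1*y1*t0*t1*p*q*w) * h10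
  have LR2 : ((1+b+p+q)*(b*p*q+p*q+b*q+b*p) + (1-b+p-q)*(b*p*q-p*q+b*q-b*p) - 4*(b*p*q)) * (a0*a1*y0*y1*z0*z1) = 0 := by
    linear_combination ((-1) * a0*y1*z0*z1*b*p*q + (-1) * a0*z0*z1^2*b*p*q + (1) * a0*z0*z1^2*b*p + (-1) * a0*z0*z1^2*b*q + (1) * a0*z0*z1^2*p*q + (1) * a1*y1*z0^2*b*p*q) * h1 + ((1) * y0*y1*z0*z1*b*p*q + (1) * y0*y1*z0*z1*b*p + (1) * y0*y1*z0*z1*b*q + (1) * y0*y1*z0*z1*p*q) * h2 + ((-1) * a0*y0*y1*z1 + (-1) * a1*y0*y1*z0) * h3 + ((1) * a0*a1*z0*z1*b*p*q + (-1) * a0*a1*z0*z1*b*p + (1) * a0*a1*z0*z1*b*q + (-1) * a0*a1*z0*z1*p*q) * h4 + ((1) * a0^2*y1*z1 + (-1) * a0*a1*y1*z0) * h5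
  have LR4 : (((1-b+w)*p-q*w)*(b*q*w-q*w+b*q-b*p) + ((1+b+w)*p+q*w)*(b*q*w+q*w+b*q+b*p) - 4*(b*p*q*w)) * (a0*a1*y0*y1*t0*t1) = 0 := by
    linear_combination ((-1) * a0*y1*t0*t1*b*p*q*w + (-1) * a0*t0*t1^2*b*p^2 + (-1) * a0*t0*t1^2*b*p*q*w + (-1) * a0*t0*t1^2*b*p*q + (-1) * a0*t0*t1^2*p*q*w + (1) * a1*y1*t0^2*b*p*q*w) * h1 + ((-1) * y0*y1*t0*t1*b*p + (1) * y0*y1*t0*t1*b*q*w + (1) * y0*y1*t0*t1*b*q + (-1) * y0*y1*t0*t1*q*w) * h6 + ((-1) * a0*y0*y1*t1*p + (-1) * a1*y0*y1*t0*p) * h7 + ((1) * a0*a1*t0*t1*b*p + (1) * a0*a1*t0*t1*b*q*w + (1) * a0*a1*t0*t1*b*q + (1) * a0*a1*t0*t1*q*w) * h8 + ((1) * a0^2*y1*t1*p + (-1) * a0*a1*y1*t0*p) * h9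
  have LR5 : ((((1-b+w)*p-q*w)*(b*q*w+q*w+b*q+b*p))*a0^2 + y0^2*(((1+b+w)*p+q*w)*(b*q*w-q*w+b*q-b*p))) * (a1*y1*t0*t1) = 0 := by
    linear_combination ((1) * a0*y1*t0*t1*b*p*q*w + (1) * a1*y1*t0^2*b*p*q*w + (1) * y0*t0*t1^2*b*p^2 + (-1) * y0*t0*t1^2*b*p*q*w + (-1) * y0*t0*t1^2*b*p*q + (1) * y0*t0*t1^2*p*q*w) * h1 + ((1) * a0*y1*t0*t1*b*p + (1) * a0*y1*t0*t1*b*q*w + (1) * a0*y1*t0*t1*b*q + (1) * a0*y1*t0*t1*q*w) * h6 + ((1) * a0*y0*y1*t1*p + (-1) * a1*y0*y1*t0*p) * h7 + ((-1) * a1*y0*t0*t1*b*p + (1) * a1*y0*t0*t1*b*q*w + (1) * a1*y0*t0*t1*b*q + (-1) * a1*y0*t0*t1*q*w) * h8 + ((-1) * a0^2*y1*t1*p + (-1) * a0*a1*y1*t0*p) * h9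
  have K1 := cancel _ _ (by
    exact mul_ne_zero (mul_ne_zero (mul_ne_zero (mul_ne_zero (mul_ne_zero
      (mul_ne_zero two_ne_zero np) (pow_ne_zero 2 na0)) (pow_ne_zero 2 na1)) ny1) nz0) nz1) LK1
  have K2 := cancel _ _ (by
    exact mul_ne_zero (mul_ne_zero (mul_ne_zero (mul_ne_zero
      (pow_ne_zero 2 na0) (pow_ne_zero 2 na1)) ny1) nt0) nt1) LK2
  have R2 := cancel _ _ (by
    exact mul_ne_zero (mul_ne_zero (mul_ne_zero (mul_ne_zero (mul_ne_zero
      na0 na1) ny0) ny1) nz0) nz1) LR2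
  have R4 := cancel _ _ (by
    exact mul_ne_zero (mul_ne_zero (mul_ne_zero (mul_ne_zero (mul_ne_zero
      na0 na1) ny0) ny1) nt0) nt1) LR4
  have R5 := cancel _ _ (by
    exact mul_ne_zero (mul_ne_zero (mul_ne_zero na1 ny1) nt0) nt1) LR5
  have n4bpqw : (4:ℂ)*(b*p*q*w) ≠ 0 := by
    exact mul_ne_zero (by norm_num) (mul_ne_zero (mul_ne_zero (mul_ne_zero nb np) nq) nw)
  have n4bpq : (4:ℂ)*(b*p*q) ≠ 0 := by
    exact mul_ne_zero (by norm_num) (mul_ne_zero (mul_ne_zero nb np) nq)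
  rcases mul_eq_zero.mp K1 with hX2 | hrest
  · -- X2 = 0
    have K2' : (((1-b+w)*p-q*w)) * ((1-b+p-q) * (b*q*w+q*w+b*q+b*p)) = 0 := by
      linear_combination K2 - ((((1-b+w)*p-q*w))*(b*q*w-q*w+b*q-b*p)) * hX2
    rcases mul_eq_zero.mp K2' with hX3 | hrest2
    · -- X3 = 0
      have hYc' : (((1+b+w)*p+q*w) * (b*q*w-q*w+b*q-b*p)) * (y0^2) = 0 := by
        linear_combination R5 - a0^2 * ((b*q*w+q*w+b*q+b*p)) * hX3
      have hYc := cancel _ _ (pow_ne_zero 2 ny0) hYc'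
      rcases mul_eq_zero.mp hYc with hY3 | hcX3
      · -- X3 = 0 and Y3 = 0 : contradiction
        exfalso
        apply n4bpqw
        linear_combination -R4 + (b*q*w-q*w+b*q-b*p) * hX3 + (b*q*w+q*w+b*q+b*p) * hY3
      · -- cX3 = 0
        have hw' : (w^2+w+1) * (4*(b*p*q)) = 0 := by
          linear_combination R4 + (2*b*q*(1+w) - 2*(b*q*w-q*w+b*q-b*p)) * hX3 + 2*p*(1+w) * hcX3
        have hw := cancel _ _ n4bpq hw'
        linear_combination (b - q*w) * hw
    · rcases mul_eq_zero.mp hrest2 with hY2 | hcY3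
      · -- X2 = 0 and Y2 = 0 : contradiction
        exfalso
        apply n4bpq
        linear_combination -R2 + (b*p*q+p*q+b*q+b*p) * hX2 + (b*p*q-p*q+b*q-b*p) * hY2
      · -- cY3 = 0
        have hYc' : (((1+b+w)*p+q*w) * (b*q*w-q*w+b*q-b*p)) * (y0^2) = 0 := by
          linear_combination R5 - a0^2 * (((1-b+w)*p-q*w)) * hcY3
        have hYc := cancel _ _ (pow_ne_zero 2 ny0) hYc'
        rcases mul_eq_zero.mp hYc with hY3 | hcX3
        · -- Y3 = 0 and cY3 = 0
          have hw' : (w^2+w+1) * (4*(b*p*q)) = 0 := by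
            linear_combination R4 + (2*b*q*(1+w) - 2*(b*q*w+q*w+b*q+b*p)) * hY3 + 2*p*(1+w) * hcY3
          have hw := cancel _ _ n4bpq hw'
          linear_combination (b - q*w) * hw
        · -- cX3 = 0 and cY3 = 0 : contradiction
          exfalso
          apply n4bpqw
          linear_combination -R4 + (((1-b+w)*p-q*w)) * hcX3 + (((1+b+w)*p+q*w)) * hcY3
  · rcases mul_eq_zero.mp hrest with hq | hb
    · -- q = b*p
      have hw' : (w^2+w+1) * (4*(b^2*p^2)) = 0 := by
        linear_combination R4 - (4*b*p*w^2 + 4*b*p*w + 2*b*p + 2*q*w^2) * hq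
      have hw := cancel _ _ (mul_ne_zero (by norm_num)
        (mul_ne_zero (pow_ne_zero 2 nb) (pow_ne_zero 2 np))) hw'
      linear_combination (b - q*w) * hw
    · -- b = q*w
      linear_combination (1 + w + w^2) * hb

set_option maxHeartbeats 2000000 in
/-- If the upper-left 4×4 submatrix of a complex Hadamard matrix
of order 6 is `!![1,1,1,1; 1,-1,1,-1; 1,b,p,q; 1,-b,w,-qw/p]`, then
`(b - qw)(1 + w + w²) = 0`. -/
theorem stmt_15 (H : Matrix (Fin 6) (Fin 6) ℂ) (hH : IsCHM H)
    (b p q w : ℂ)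
    (hsub : ∀ i j : Fin 4,
      H (Fin.castLE (by norm_num) i) (Fin.castLE (by norm_num) j) =
        !![1, 1, 1, 1; 1, -1, 1, -1; 1, b, p, q; 1, -b, w, -(q * w / p)] i j) :
    (b - q * w) * (1 + w + w^2) = 0 := by
  obtain ⟨habs, horth⟩ := hH
  have h00 : H 0 0 = 1 := by simpa using hsub 0 0
  have h01 : H 0 1 = 1 := by simpa using hsub 0 1
  have h02 : H 0 2 = 1 := by simpa using hsub 0 2
  have h03 : H 0 3 = 1 := by simpa using hsub 0 3
  have h10 : H 1 0 = 1 := by simpa using hsub 1 0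
  have h11 : H 1 1 = -1 := by simpa using hsub 1 1
  have h12 : H 1 2 = 1 := by simpa using hsub 1 2
  have h13 : H 1 3 = -1 := by simpa using hsub 1 3
  have h20 : H 2 0 = 1 := by simpa using hsub 2 0
  have h21 : H 2 1 = b := by simpa using hsub 2 1
  have h22 : H 2 2 = p := by simpa using hsub 2 2
  have h23 : H 2 3 = q := by simpa using hsub 2 3
  have h30 : H 3 0 = 1 := by simpa using hsub 3 0
  have h31 : H 3 1 = -b := by simpa using hsub 3 1
  have h32 : H 3 2 = w := by simpa using hsub 3 2
  have h33 : H 3 3 = -(q * w / p) := by simpa using hsub 3 3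
  have ab : ‖b‖ = 1 := by rw [← h21]; exact habs 2 1
  have ap : ‖p‖ = 1 := by rw [← h22]; exact habs 2 2
  have aq : ‖q‖ = 1 := by rw [← h23]; exact habs 2 3
  have aw : ‖w‖ = 1 := by rw [← h32]; exact habs 3 2
  have nb := ne_zero_of_abs_one ab
  have np := ne_zero_of_abs_one ap
  have nq := ne_zero_of_abs_one aq
  have nw := ne_zero_of_abs_one aw
  have nA0 := ne_zero_of_abs_one (habs 0 4)
  have nA1 := ne_zero_of_abs_one (habs 0 5)
  have nY0 := ne_zero_of_abs_one (habs 1 4)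
  have nY1 := ne_zero_of_abs_one (habs 1 5)
  have nZ0 := ne_zero_of_abs_one (habs 2 4)
  have nZ1 := ne_zero_of_abs_one (habs 2 5)
  have nT0 := ne_zero_of_abs_one (habs 3 4)
  have nT1 := ne_zero_of_abs_one (habs 3 5)
  have sA0 := star_eq_inv' (habs 0 4)
  have sA1 := star_eq_inv' (habs 0 5)
  have sY0 := star_eq_inv' (habs 1 4)
  have sY1 := star_eq_inv' (habs 1 5)
  have sZ0 := star_eq_inv' (habs 2 4)
  have sZ1 := star_eq_inv' (habs 2 5)
  have sT0 := star_eq_inv' (habs 3 4)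
  have sT1 := star_eq_inv' (habs 3 5)
  have sB := star_eq_inv' ab
  have sP := star_eq_inv' ap
  have sQ := star_eq_inv' aq
  have sW := star_eq_inv' aw
  have H1 : H 1 4 * H 0 5 + H 1 5 * H 0 4 = 0 := by
    have e := horth 1 0 (by decide)
    rw [Fin.sum_univ_six, h00, h01, h02, h03, h10, h11, h12, h13, sA0, sA1] at e
    simp only [star_one] at e
    field_simp at e; linear_combination e
  have H2 : (1+b+p+q)*(H 0 4*H 0 5) + H 2 4*H 0 5 + H 2 5*H 0 4 = 0 := by
    have e := horth 2 0 (by decide)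
    rw [Fin.sum_univ_six, h00, h01, h02, h03, h20, h21, h22, h23, sA0, sA1] at e
    simp only [star_one] at e
    field_simp at e; linear_combination e
  have H3 : (b*p*q+p*q+b*q+b*p)*(H 2 4*H 2 5) + b*p*q*(H 0 4*H 2 5 + H 0 5*H 2 4) = 0 := by
    have e := horth 0 2 (by decide)
    rw [Fin.sum_univ_six, h00, h01, h02, h03, h20, h21, h22, h23, sZ0, sZ1, sB, sP, sQ] at e
    simp only [star_one] at e
    field_simp at e; linear_combination e
  have H4 : (1-b+p-q)*(H 1 4*H 1 5) + H 2 4*H 1 5 + H 2 5*H 1 4 = 0 := by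
    have e := horth 2 1 (by decide)
    rw [Fin.sum_univ_six, h10, h11, h12, h13, h20, h21, h22, h23, sY0, sY1] at e
    simp only [star_one, star_neg] at e
    field_simp at e; linear_combination e
  have H5 : (b*p*q-p*q+b*q-b*p)*(H 2 4*H 2 5) + b*p*q*(H 1 4*H 2 5 + H 1 5*H 2 4) = 0 := by
    have e := horth 1 2 (by decide)
    rw [Fin.sum_univ_six, h10, h11, h12, h13, h20, h21, h22, h23, sZ0, sZ1, sB, sP, sQ] at e
    simp only [star_one] at e
    field_simp at e; linear_combination e
  have H6 : ((1-b+w)*p - q*w)*(H 0 4*H 0 5) + p*(H 3 4*H 0 5 + H 3 5*H 0 4) = 0 := by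
    have e := horth 3 0 (by decide)
    rw [Fin.sum_univ_six, h00, h01, h02, h03, h30, h31, h32, h33, sA0, sA1] at e
    simp only [star_one] at e
    field_simp at e; linear_combination e
  have H7 : (b*q*w-q*w+b*q-b*p)*(H 3 4*H 3 5) + b*q*w*(H 0 4*H 3 5 + H 0 5*H 3 4) = 0 := by
    have e := horth 0 3 (by decide)
    rw [Fin.sum_univ_six, h00, h01, h02, h03, h30, h31, h32, h33, sT0, sT1] at e
    simp only [star_one, star_neg, star_div₀, star_mul', sB, sQ, sW, sP] at e
    field_simp at e
    apply cancel_left nw; linear_combination w * e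
  have H8 : ((1+b+w)*p + q*w)*(H 1 4*H 1 5) + p*(H 3 4*H 1 5 + H 3 5*H 1 4) = 0 := by
    have e := horth 3 1 (by decide)
    rw [Fin.sum_univ_six, h10, h11, h12, h13, h30, h31, h32, h33, sY0, sY1] at e
    simp only [star_one, star_neg] at e
    field_simp at e; linear_combination e
  have H9 : (b*q*w+q*w+b*q+b*p)*(H 3 4*H 3 5) + b*q*w*(H 1 4*H 3 5 + H 1 5*H 3 4) = 0 := by
    have e := horth 1 3 (by decide)
    rw [Fin.sum_univ_six, h10, h11, h12, h13, h30, h31, h32, h33, sT0, sT1] at e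
    simp only [star_one, star_neg, star_div₀, star_mul', sB, sQ, sW, sP] at e
    field_simp at e
    apply cancel_left nw; linear_combination w * e
  have H10 : H 3 4 * H 2 5 + H 3 5 * H 2 4 = 0 := by
    have e := horth 3 2 (by decide)
    rw [Fin.sum_univ_six, h20, h21, h22, h23, h30, h31, h32, h33, sZ0, sZ1, sB, sP, sQ] at e
    simp only [star_one] at e
    field_simp at e
    apply cancel_left (mul_ne_zero (pow_ne_zero 2 np) nq); linear_combination (p * q) * e
  exact key_alg (H 0 4) (H 0 5) (H 1 4) (H 1 5) (H 2 4) (H 2 5) (H 3 4) (H 3 5) b p q w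
    nA0 nA1 nY0 nY1 nZ0 nZ1 nT0 nT1 nb np nq nw H1 H2 H3 H4 H5 H6 H7 H8 H9 H10
end
end
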